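/- For every $x, y \in [0,1]$ with $y > 0$, the binary relative entropy satisfies $D\left(\frac{x+y}{1+y} \,\Big\|\, \frac{y}{1+y}\right) \ge \frac{x^2}{2y}\, B\!\left(\frac{x}{y}\right)$, where $B(u) = \frac{2[(1+u)\ln(1+u) - u]}{u^2}$ for $u > 0$. -/

import Mathlib

/-- Binary relative entropy (KL divergence between Bernoulli(p) and Bernoulli(q)). -/
noncomputable def binKL (p q : ℝ) : ℝ :=
  p * Real.log (p / q) + (1 - p) * Real.log ((1 - p) / (1 - q))

/-- The function `B(u) = 2[(1+u)ln(1+u) - u]/u²`. -/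
noncomputable def Bfun (u : ℝ) : ℝ := 2 * ((1 + u) * Real.log (1 + u) - u) / u ^ 2

private lemma hasDerivAt_aux (y : ℝ) (hy : 0 < y) (t : ℝ) (ht0 : 0 ≤ t) (ht1 : t < 1) :
    HasDerivAt (fun t => t + t*y + (1-t)*Real.log (1-t)
        - y*((t+y)*(Real.log (t+y) - Real.log y)))
      (-(Real.log (1-t)) - y*(Real.log (t+y) - Real.log y)) t := by
  have h1t : (0:ℝ) < 1 - t := by linarith
  have hty : (0:ℝ) < t + y := by linarith
  have hA : HasDerivAt (fun t : ℝ => 1 - t) (-1) t := by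
    simpa using (hasDerivAt_id t).const_sub 1
  have h2 : HasDerivAt (fun t : ℝ => (1-t)*Real.log (1-t))
      ((-1) * Real.log (1-t) + (1-t) * ((-1)/(1-t))) t :=
    hA.mul (hA.log (ne_of_gt h1t))
  have hB : HasDerivAt (fun t : ℝ => t + y) 1 t := (hasDerivAt_id t).add_const y
  have h3 : HasDerivAt (fun t : ℝ => (t+y)*(Real.log (t+y) - Real.log y))
      (1 * (Real.log (t+y) - Real.log y) + (t+y) * (1/(t+y) - 0)) t :=
    hB.mul ((hB.log (ne_of_gt hty)).sub (hasDerivAt_const t (Real.log y)))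
  have h1 : HasDerivAt (fun t : ℝ => t + t*y) (1 + 1*y) t :=
    (hasDerivAt_id t).add ((hasDerivAt_id t).mul_const y)
  have := (h1.add h2).sub (h3.const_mul y)
  refine HasDerivAt.congr_deriv this ?_
  have e1 : (1-t) * ((-1)/(1-t)) = -1 := by field_simp
  have e2 : (t+y) * (1/(t+y) - 0) = 1 := by field_simp; ring
  rw [e1, e2]
  ring

private lemma key (y : ℝ) (hy : 0 < y) (x : ℝ) (hx0 : 0 ≤ x) (hx1 : x ≤ 1) :
    y*((x+y)*(Real.log (x+y) - Real.log y)) ≤ x + x*y + (1-x)*Real.log (1-x) := by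
  rcases eq_or_lt_of_le hx1 with rfl | hx1
  · -- x = 1
    simp only [sub_self, Real.log_zero, mul_zero, zero_mul, add_zero]
    have h : Real.log (1+y) - Real.log y ≤ 1/y := by
      rw [← Real.log_div (by positivity) (ne_of_gt hy)]
      have := Real.log_le_sub_one_of_pos (show (0:ℝ) < (1+y)/y by positivity)
      have : Real.log ((1+y)/y) ≤ (1+y)/y - 1 := this
      have h2 : (1+y)/y - 1 = 1/y := by field_simp; ring
      linarith [h2 ▸ this]
    have hpos : (0:ℝ) ≤ y*(1+y) := by positivity
    have h3 : y*(1+y)*(Real.log (1+y) - Real.log y) ≤ y*(1+y)*(1/y) :=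
      mul_le_mul_of_nonneg_left h hpos
    have he : y*(1+y)*(1/y) = 1+y := by field_simp
    nlinarith [h3, he]
  · -- x < 1
    set f := fun t : ℝ => t + t*y + (1-t)*Real.log (1-t)
        - y*((t+y)*(Real.log (t+y) - Real.log y)) with hf
    have hmono : MonotoneOn f (Set.Icc 0 x) := by
      apply monotoneOn_of_deriv_nonneg (convex_Icc 0 x)
      · intro t ht
        exact (hasDerivAt_aux y hy t ht.1 (lt_of_le_of_lt ht.2 hx1)).continuousAt.continuousWithinAt
      · intro t ht
        rw [interior_Icc] at ht
        exact (hasDerivAt_aux y hy t (le_of_lt ht.1) (lt_trans ht.2 hx1)).differentiableAt.differentiableWithinAt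
      · intro t ht
        rw [interior_Icc] at ht
        rw [(hasDerivAt_aux y hy t (le_of_lt ht.1) (lt_trans ht.2 hx1)).deriv]
        have h1t : (0:ℝ) < 1 - t := by linarith [ht.2, hx1]
        have h1 : Real.log (1-t) ≤ -t := by
          have := Real.log_le_sub_one_of_pos h1t
          linarith
        have h2 : y*(Real.log (t+y) - Real.log y) ≤ t := by
          have hty : (0:ℝ) < t + y := by linarith [ht.1]
          rw [← Real.log_div (ne_of_gt hty) (ne_of_gt hy)]
          have := Real.log_le_sub_one_of_pos (show (0:ℝ) < (t+y)/y by positivity)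
          have heq : (t+y)/y - 1 = t/y := by field_simp; ring
          have : Real.log ((t+y)/y) ≤ t/y := by linarith [heq ▸ this]
          calc y * Real.log ((t+y)/y) ≤ y * (t/y) :=
                mul_le_mul_of_nonneg_left this (le_of_lt hy)
            _ = t := by field_simp
        linarith
    have h0 : f 0 = 0 := by simp [hf]
    have := hmono (Set.left_mem_Icc.mpr hx0) (Set.mem_Icc.mpr ⟨hx0, le_refl x⟩) hx0
    rw [h0] at this
    simp only [hf] at this
    linarith

/-- lower bound on the divergence. -/
theorem stmt_5 (x y : ℝ) (hx : x ∈ Set.Icc (0:ℝ) 1) (hy : y ∈ Set.Icc (0:ℝ) 1)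
    (hy0 : 0 < y) :
    x ^ 2 / (2 * y) * Bfun (x / y) ≤ binKL ((x + y) / (1 + y)) (y / (1 + y)) := by
  obtain ⟨hx0, hx1⟩ := hx
  have h1y : (0:ℝ) < 1 + y := by linarith
  have hq : (y/(1+y)) / ((y/(1+y))) = 1 := div_self (by positivity)
  -- Rewrite binKL
  have hxy0 : (0:ℝ) < x + y := by linarith
  have hp : ((x+y)/(1+y)) / (y/(1+y)) = (x+y)/y := by
    field_simp
  have h1p : 1 - (x+y)/(1+y) = (1-x)/(1+y) := by field_simp; ring
  have h1q : 1 - y/(1+y) = 1/(1+y) := by field_simp; ring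
  have hr : ((1-x)/(1+y)) / (1/(1+y)) = 1-x := by field_simp
  have hbin : binKL ((x + y) / (1 + y)) (y / (1 + y))
      = ((x+y)*(Real.log (x+y) - Real.log y) + (1-x)*Real.log (1-x)) / (1+y) := by
    rw [binKL, hp, h1p, h1q, hr, Real.log_div (ne_of_gt hxy0) (ne_of_gt hy0)]
    field_simp
  rw [hbin]
  rcases eq_or_lt_of_le hx0 with rfl | hx0
  · simp [Bfun]
  · -- x > 0 : compute LHS
    have hL : x ^ 2 / (2 * y) * Bfun (x / y)
        = (x+y)*(Real.log (x+y) - Real.log y) - x := by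
      rw [Bfun]
      have h1u : 1 + x/y = (x+y)/y := by field_simp; ring
      rw [h1u, Real.log_div (ne_of_gt hxy0) (ne_of_gt hy0)]
      field_simp
    rw [hL, le_div_iff₀ h1y]
    have hk := key y hy0 x (le_of_lt hx0) hx1
    nlinarith [hk]
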